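/- The map 𝓕^cer : ℝ^{3×3} → ℝ, σ ↦ ∫_{S²} ((max{0, nᵀσn})/σ_c)^m dS(n), with m > 1 and σ_c > 0, is continuously (Fréchet) differentiable, with derivative at σ₀ in direction M given by ∫_{S²} m·(max{0, nᵀσ₀n})^{m-1}·(nᵀMn)/σ_c^m dS(n); in particular the integrand derivative vanishes wherever nᵀσ₀n ≤ 0. -/

import Mathlib

set_option synthInstance.maxHeartbeats 1000000
set_option maxHeartbeats 1000000

open MeasureTheory Real


lemma lipcos : LipschitzWith 1 Real.cos := by
  apply lipschitzWith_of_nnnorm_deriv_le Real.differentiable_cos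
  intro x
  rw [Real.deriv_cos]
  rw [← NNReal.coe_le_coe, coe_nnnorm]
  simpa using Real.abs_sin_le_one x

lemma lipsin : LipschitzWith 1 Real.sin := by
  apply lipschitzWith_of_nnnorm_deriv_le Real.differentiable_sin
  intro x
  rw [Real.deriv_sin, ← NNReal.coe_le_coe, coe_nnnorm]
  simpa using Real.abs_cos_le_one x

noncomputable def ψsph : ℝ × ℝ → (Fin 3 → ℝ) := fun p =>
  ![Real.cos p.1 * Real.cos p.2, Real.cos p.1 * Real.sin p.2, Real.sin p.1]

lemma lip_ψsph : LipschitzWith 2 ψsph := by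
  apply LipschitzWith.of_dist_le_mul
  intro p q
  rw [dist_pi_le_iff (by positivity)]
  intro i
  have h1 : dist p.1 q.1 ≤ dist p q := le_trans (le_max_left _ _) Prod.dist_eq.ge
  have h2 : dist p.2 q.2 ≤ dist p q := le_trans (le_max_right _ _) Prod.dist_eq.ge
  have hc : ∀ a b : ℝ, |Real.cos a - Real.cos b| ≤ |a - b| := by
    intro a b; simpa [Real.dist_eq] using lipcos.dist_le_mul a b
  have hs : ∀ a b : ℝ, |Real.sin a - Real.sin b| ≤ |a - b| := by
    intro a b; simpa [Real.dist_eq] using lipsin.dist_le_mul a b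
  have key : ∀ f g : ℝ → ℝ, (∀ x, |f x| ≤ 1) → (∀ x, |g x| ≤ 1) →
      (∀ a b, |f a - f b| ≤ |a - b|) → (∀ a b, |g a - g b| ≤ |a - b|) →
      dist (f p.1 * g p.2) (f q.1 * g q.2) ≤ 2 * dist p q := by
    intro f g hf hg hfd hgd
    rw [Real.dist_eq]
    have : f p.1 * g p.2 - f q.1 * g q.2 = f p.1 * (g p.2 - g q.2) + (f p.1 - f q.1) * g q.2 := by
      ring
    rw [this]
    calc |f p.1 * (g p.2 - g q.2) + (f p.1 - f q.1) * g q.2|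
        ≤ |f p.1 * (g p.2 - g q.2)| + |(f p.1 - f q.1) * g q.2| := abs_add_le _ _
      _ ≤ |g p.2 - g q.2| + |f p.1 - f q.1| := by
          rw [abs_mul, abs_mul]
          gcongr
          · calc |f p.1| * |g p.2 - g q.2| ≤ 1 * |g p.2 - g q.2| := by
                  gcongr; exact hf _
               _ = |g p.2 - g q.2| := one_mul _
          · calc |f p.1 - f q.1| * |g q.2| ≤ |f p.1 - f q.1| * 1 := by
                  gcongr; exact hg _
               _ = |f p.1 - f q.1| := mul_one _
      _ ≤ |p.2 - q.2| + |p.1 - q.1| := add_le_add (hgd _ _) (hfd _ _)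
      _ ≤ dist p q + dist p q := by
          rw [← Real.dist_eq, ← Real.dist_eq]; exact add_le_add h2 h1
      _ = 2 * dist p q := by ring
  fin_cases i
  · exact key Real.cos Real.cos Real.abs_cos_le_one Real.abs_cos_le_one hc hc
  · exact key Real.cos Real.sin Real.abs_cos_le_one Real.abs_sin_le_one hc hs
  · simpa [ψsph, Real.dist_eq] using le_trans (hs p.1 q.1) (by
      rw [← Real.dist_eq]
      nlinarith [dist_nonneg (x := p) (y := q)])



noncomputable def φsph : ℝ × ℝ → EuclideanSpace ℝ (Fin 3) := fun p =>
  (WithLp.equiv 2 (Fin 3 → ℝ)).symm (ψsph p)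

lemma sphere_subset_image :
    Metric.sphere (0 : EuclideanSpace ℝ (Fin 3)) 1 ⊆
      φsph '' (Set.Icc ((-4 : ℝ), (-4 : ℝ)) (4, 4)) := by
  intro n hn
  have hn1 : ‖n‖ = 1 := by simpa using mem_sphere_zero_iff_norm.mp hn
  have hsum : (n 0) ^ 2 + (n 1) ^ 2 + (n 2) ^ 2 = 1 := by
    have := EuclideanSpace.norm_eq n
    rw [hn1] at this
    have h2 : Real.sqrt (∑ i : Fin 3, ‖n i‖ ^ 2) = 1 := this.symm
    have h3 : (∑ i : Fin 3, ‖n i‖ ^ 2) = 1 := by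
      nlinarith [Real.sq_sqrt (by positivity : (0:ℝ) ≤ ∑ i : Fin 3, ‖n i‖ ^ 2),
        Finset.sum_nonneg (s := Finset.univ) (fun (i : Fin 3) _ => sq_nonneg ‖n i‖)]
    simpa [Fin.sum_univ_three, sq_abs, Real.norm_eq_abs] using h3
  set t := n 2 with ht
  have ht1 : t ^ 2 ≤ 1 := by nlinarith [sq_nonneg (n 0), sq_nonneg (n 1)]
  have htm : -1 ≤ t := by nlinarith
  have htM : t ≤ 1 := by nlinarith
  set θ := Real.arcsin t with hθ
  have hsinθ : Real.sin θ = t := Real.sin_arcsin htm htM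
  have hcosθ : Real.cos θ = Real.sqrt (1 - t ^ 2) := Real.cos_arcsin t
  set z : ℂ := ⟨n 0, n 1⟩ with hz
  have habs : ‖z‖ = Real.cos θ := by
    rw [hcosθ, Complex.norm_def, Complex.normSq_mk]
    congr 1
    nlinarith
  refine ⟨(θ, z.arg), ?_, ?_⟩
  · have hpi : Real.pi ≤ 4 := by nlinarith [Real.pi_lt_d2]
    constructor <;> constructor
    · simp only
      nlinarith [Real.neg_pi_div_two_le_arcsin t]
    · simp only
      nlinarith [Complex.neg_pi_lt_arg z]
    · simp only
      nlinarith [Real.arcsin_le_pi_div_two t]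
    · simp only
      nlinarith [Complex.arg_le_pi z]
  · have h0 : Real.cos θ * Real.cos z.arg = n 0 := by
      rw [← habs]; exact Complex.norm_mul_cos_arg z
    have h1 : Real.cos θ * Real.sin z.arg = n 1 := by
      rw [← habs]; exact Complex.norm_mul_sin_arg z
    ext i
    fin_cases i
    · simpa [φsph, ψsph] using h0
    · simpa [φsph, ψsph] using h1
    · simpa [φsph, ψsph] using hsinθ

lemma lip_φsph : ∃ K : NNReal, LipschitzWith K φsph := by
  have h1 : LipschitzWith ((3 : NNReal) ^ ((1 / (2:ENNReal)).toReal))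
      ((WithLp.equiv 2 (Fin 3 → ℝ)).symm) := by
    simpa using PiLp.lipschitzWith_toLp 2 (fun _ : Fin 3 => ℝ)
  exact ⟨_, h1.comp lip_ψsph⟩

lemma sphere_meas_lt_top :
    μH[2] (Metric.sphere (0 : EuclideanSpace ℝ (Fin 3)) 1) < ⊤ := by
  obtain ⟨K, hK⟩ := lip_φsph
  have h1 := hK.hausdorffMeasure_image_le (by norm_num : (0:ℝ) ≤ 2)
      (Set.Icc ((-4 : ℝ), (-4 : ℝ)) (4, 4))
  have h2 : μH[2] (Set.Icc ((-4 : ℝ), (-4 : ℝ)) ((4:ℝ), (4:ℝ))) < ⊤ := by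
    rw [MeasureTheory.hausdorffMeasure_prod_real]
    exact isCompact_Icc.measure_lt_top
  calc μH[2] (Metric.sphere (0 : EuclideanSpace ℝ (Fin 3)) 1)
      ≤ μH[2] (φsph '' (Set.Icc ((-4 : ℝ), (-4 : ℝ)) (4, 4))) :=
        measure_mono sphere_subset_image
    _ ≤ (K : ENNReal) ^ (2:ℝ) * μH[2] (Set.Icc ((-4 : ℝ), (-4 : ℝ)) ((4:ℝ), (4:ℝ))) := h1
    _ < ⊤ := ENNReal.mul_lt_top
        (ENNReal.rpow_lt_top_of_nonneg (by norm_num) ENNReal.coe_ne_top) h2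

instance : IsFiniteMeasure ((μH[2] : Measure (EuclideanSpace ℝ (Fin 3))).restrict
    (Metric.sphere 0 1)) := by
  constructor
  rw [Measure.restrict_apply_univ]
  exact sphere_meas_lt_top


lemma hasDerivAt_gmax {m σc : ℝ} (hm : 1 < m) (hσc : 0 < σc) (x : ℝ) :
    HasDerivAt (fun y => (max 0 y / σc) ^ m) (m * (max 0 x) ^ (m - 1) / σc ^ m) x := by
  have hm0 : (0:ℝ) < m := by linarith
  have hm1 : (0:ℝ) < m - 1 := by linarith
  rcases lt_trichotomy x 0 with hx | hx | hx
  · -- locally zero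
    have hev : (fun y => (max 0 y / σc) ^ m) =ᶠ[nhds x] fun _ => (0:ℝ) := by
      filter_upwards [eventually_lt_nhds hx] with y hy
      rw [max_eq_left hy.le, zero_div, Real.zero_rpow hm0.ne']
    have h0 : HasDerivAt (fun _ : ℝ => (0:ℝ)) 0 x := hasDerivAt_const x 0
    have := h0.congr_of_eventuallyEq hev
    refine this.congr_deriv ?_
    rw [max_eq_left hx.le, Real.zero_rpow hm1.ne', mul_zero, zero_div]
  · -- at zero
    subst hx
    have key : HasDerivAt (fun y => (max 0 y / σc) ^ m) 0 0 := by
      rw [hasDerivAt_iff_tendsto_slope]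
      have hb : ∀ h : ℝ, h ≠ 0 → ‖slope (fun y => (max 0 y / σc) ^ m) 0 h‖ ≤
          |h| ^ (m - 1) / σc ^ m := by
        intro h hh
        have h1 : max 0 h ≤ |h| := max_le (abs_nonneg h) (le_abs_self h)
        have h2 : (0:ℝ) ≤ max 0 h := le_max_left 0 h
        rw [slope_def_field]
        have hg0 : (max 0 (0:ℝ) / σc) ^ m = 0 := by
          rw [max_self, zero_div, Real.zero_rpow hm0.ne']
        rw [hg0, sub_zero, sub_zero, div_eq_mul_inv, norm_mul, norm_inv, Real.norm_eq_abs,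
          Real.norm_eq_abs]
        have h3 : |(max 0 h / σc) ^ m| = (max 0 h / σc) ^ m :=
          abs_of_nonneg (Real.rpow_nonneg (by positivity) m)
        rw [h3]
        have h4 : (max 0 h / σc) ^ m ≤ (|h| / σc) ^ m :=
          Real.rpow_le_rpow (by positivity) (by gcongr) hm0.le
        calc (max 0 h / σc) ^ m * |h|⁻¹ ≤ (|h| / σc) ^ m * |h|⁻¹ := by
              gcongr
          _ = |h| ^ (m - 1) / σc ^ m := by
              rw [Real.div_rpow (abs_nonneg h) hσc.le]
              have h5 : |h| ^ m = |h| ^ (m - 1) * |h| := by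
                rw [← Real.rpow_add_one (abs_ne_zero.mpr hh)]
                ring_nf
              rw [h5]
              field_simp
      have htend : Filter.Tendsto (fun h : ℝ => |h| ^ (m - 1) / σc ^ m)
          (nhdsWithin 0 {(0:ℝ)}ᶜ) (nhds 0) := by
        apply Filter.Tendsto.mono_left _ nhdsWithin_le_nhds
        have : ContinuousAt (fun h : ℝ => |h| ^ (m - 1) / σc ^ m) 0 := by
          apply ContinuousAt.div_const
          exact (Real.continuousAt_rpow_const _ _ (Or.inr hm1.le)).comp
            (continuous_abs.continuousAt)
        have h0 : |(0:ℝ)| ^ (m - 1) / σc ^ m = 0 := by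
          rw [abs_zero, Real.zero_rpow hm1.ne', zero_div]
        have ht := this.tendsto
        rw [h0] at ht
        exact ht
      apply squeeze_zero_norm' _ htend
      filter_upwards [self_mem_nhdsWithin] with h hh
      exact hb h hh
    convert key using 1
    rw [max_self, Real.zero_rpow hm1.ne', mul_zero, zero_div]
  · -- positive
    have h1 : HasDerivAt (fun y : ℝ => y / σc) (1 / σc) x := by
      simpa using (hasDerivAt_id x).div_const σc
    have h2 : HasDerivAt (fun y : ℝ => y ^ m) (m * (x / σc) ^ (m - 1)) (x / σc) :=
      Real.hasDerivAt_rpow_const (Or.inl (by positivity))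
    have h3 := h2.comp x h1
    have hev : (fun y => (max 0 y / σc) ^ m) =ᶠ[nhds x] fun y => (y / σc) ^ m := by
      filter_upwards [eventually_gt_nhds hx] with y hy
      rw [max_eq_right hy.le]
    have h4 := h3.congr_of_eventuallyEq hev
    refine h4.congr_deriv ?_
    rw [max_eq_right hx.le, Real.div_rpow hx.le hσc.le]
    have h5 : σc ^ m = σc ^ (m - 1) * σc := by
      rw [← Real.rpow_add_one hσc.ne']; ring_nf
    rw [h5]
    field_simp

lemma aux_main (m σc : ℝ) (hm : 1 < m) (hσc : 0 < σc)
    (μ : Measure (EuclideanSpace ℝ (Fin 3))) [IsFiniteMeasure μ]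
    (hμ : ∀ᵐ n ∂μ, ‖n‖ = 1) :
    ContDiff ℝ 1 (fun σ : EuclideanSpace ℝ (Fin 3) →L[ℝ] EuclideanSpace ℝ (Fin 3) =>
      ∫ n, (max 0 (inner ℝ (σ n) n : ℝ) / σc) ^ m ∂μ) ∧
    ∀ (σ₀ M : EuclideanSpace ℝ (Fin 3) →L[ℝ] EuclideanSpace ℝ (Fin 3)),
      fderiv ℝ (fun σ : EuclideanSpace ℝ (Fin 3) →L[ℝ] EuclideanSpace ℝ (Fin 3) =>
          ∫ n, (max 0 (inner ℝ (σ n) n : ℝ) / σc) ^ m ∂μ) σ₀ M =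
        ∫ n, m * (max 0 (inner ℝ (σ₀ n) n : ℝ)) ^ (m - 1) * (inner ℝ (M n) n : ℝ) / σc ^ m ∂μ := by
  have hm0 : (0:ℝ) < m := by linarith
  have hm1 : (0:ℝ) ≤ m - 1 := by linarith
  set E := EuclideanSpace ℝ (Fin 3)
  let L : E → ((E →L[ℝ] E) →L[ℝ] ℝ) :=
    fun n => (innerSL ℝ n).comp (ContinuousLinearMap.apply ℝ E n)
  have hLapp : ∀ (n : E) (σ : E →L[ℝ] E), L n σ = (inner ℝ (σ n) n : ℝ) := by
    intro n σ
    simp only [L, ContinuousLinearMap.comp_apply, ContinuousLinearMap.apply_apply,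
      innerSL_apply_apply]
    exact real_inner_comm (σ n) n
  have hLnorm : ∀ n : E, ‖L n‖ ≤ ‖n‖ * ‖n‖ := by
    intro n
    apply ContinuousLinearMap.opNorm_le_bound _ (by positivity)
    intro σ
    rw [hLapp, Real.norm_eq_abs]
    calc |(inner ℝ (σ n) n : ℝ)| ≤ ‖σ n‖ * ‖n‖ := abs_real_inner_le_norm _ _
      _ ≤ (‖σ‖ * ‖n‖) * ‖n‖ := by gcongr; exact σ.le_opNorm n
      _ = ‖n‖ * ‖n‖ * ‖σ‖ := by ring
  let g' : ℝ → ℝ := fun c => m * (max 0 c) ^ (m - 1) / σc ^ m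
  let F' : (E →L[ℝ] E) → E → ((E →L[ℝ] E) →L[ℝ] ℝ) :=
    fun σ n => g' ((inner ℝ (σ n) n : ℝ)) • L n
  have hg'cont : Continuous g' := by
    apply Continuous.div_const
    exact continuous_const.mul ((continuous_const.max continuous_id).rpow_const
      (fun x => Or.inr hm1))
  have hg'nonneg : ∀ c, 0 ≤ g' c := by
    intro c
    apply div_nonneg _ (Real.rpow_nonneg hσc.le m)
    exact mul_nonneg hm0.le (Real.rpow_nonneg (le_max_left _ _) _)
  have hinner_cont_n : ∀ σ : E →L[ℝ] E, Continuous fun n : E => (inner ℝ (σ n) n : ℝ) :=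
    fun σ => σ.continuous.inner continuous_id
  have hinner_cont_σ : ∀ n : E, Continuous fun σ : E →L[ℝ] E => (inner ℝ (σ n) n : ℝ) := by
    intro n
    have : (fun σ : E →L[ℝ] E => (inner ℝ (σ n) n : ℝ)) = fun σ => L n σ :=
      funext fun σ => (hLapp n σ).symm
    rw [this]
    exact (L n).continuous
  have hLcont : Continuous L :=
    (innerSL ℝ).continuous.clm_comp (ContinuousLinearMap.apply ℝ E).continuous
  -- pointwise derivative
  have key : ∀ (σ : E →L[ℝ] E) (n : E),
      HasFDerivAt (fun σ : E →L[ℝ] E => (max 0 (inner ℝ (σ n) n : ℝ) / σc) ^ m) (F' σ n) σ := by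
    intro σ n
    have h1 : HasFDerivAt (fun σ : E →L[ℝ] E => (inner ℝ (σ n) n : ℝ)) (L n) σ := by
      have h := (L n).hasFDerivAt (x := σ)
      have heq : (fun σ : E →L[ℝ] E => (inner ℝ (σ n) n : ℝ)) = fun σ => L n σ :=
        funext fun σ => (hLapp n σ).symm
      rw [heq]
      exact h
    exact (hasDerivAt_gmax hm hσc _).comp_hasFDerivAt σ h1
  -- measurability
  have hmeasF : ∀ σ : E →L[ℝ] E,
      AEStronglyMeasurable (fun n : E => (max 0 (inner ℝ (σ n) n : ℝ) / σc) ^ m) μ := by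
    intro σ
    exact (((continuous_const.max (hinner_cont_n σ)).div_const σc).rpow_const
      (fun x => Or.inr hm0.le)).aestronglyMeasurable
  have hmeasF' : ∀ σ : E →L[ℝ] E, AEStronglyMeasurable (F' σ) μ := by
    intro σ
    exact ((hg'cont.comp (hinner_cont_n σ)).smul hLcont).aestronglyMeasurable
  -- bound
  have hbound : ∀ σ₀ : E →L[ℝ] E, ∀ᵐ n ∂μ, ∀ x ∈ Metric.ball σ₀ 1,
      ‖F' x n‖ ≤ m * (‖σ₀‖ + 1) ^ (m - 1) / σc ^ m := by
    intro σ₀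
    filter_upwards [hμ] with n hn1 x hx
    have hLn : ‖L n‖ ≤ 1 := by
      have := hLnorm n
      rw [hn1] at this
      simpa using this
    have hx1 : ‖x‖ ≤ ‖σ₀‖ + 1 := by
      have hd : dist x σ₀ < 1 := Metric.mem_ball.mp hx
      have h2 := norm_sub_norm_le x σ₀
      have h3 : ‖x - σ₀‖ = dist x σ₀ := (dist_eq_norm x σ₀).symm
      linarith
    have hc : max 0 (inner ℝ (x n) n : ℝ) ≤ ‖σ₀‖ + 1 := by
      apply max_le (by positivity)
      calc (inner ℝ (x n) n : ℝ) ≤ ‖x n‖ * ‖n‖ := real_inner_le_norm _ _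
        _ ≤ (‖x‖ * ‖n‖) * ‖n‖ := by gcongr; exact x.le_opNorm n
        _ = ‖x‖ := by rw [hn1]; ring
        _ ≤ ‖σ₀‖ + 1 := hx1
    have hs1 : ‖F' x n‖ ≤ g' (inner ℝ (x n) n : ℝ) := by
      simp only [F']
      calc ‖g' ((inner ℝ (x n) n : ℝ)) • L n‖ ≤ ‖g' ((inner ℝ (x n) n : ℝ))‖ * ‖L n‖ :=
            ContinuousLinearMap.opNorm_smul_le _ _
        _ ≤ g' (inner ℝ (x n) n : ℝ) * 1 := by
            rw [Real.norm_eq_abs, abs_of_nonneg (hg'nonneg _)]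
            gcongr
        _ = g' (inner ℝ (x n) n : ℝ) := mul_one _
    apply hs1.trans
    have hr : (max 0 (inner ℝ (x n) n : ℝ)) ^ (m - 1) ≤ (‖σ₀‖ + 1) ^ (m - 1) :=
      Real.rpow_le_rpow (le_max_left _ _) hc hm1
    simp only [g']
    gcongr
  -- integrability
  have hIntF : ∀ σ₀ : E →L[ℝ] E,
      Integrable (fun n : E => (max 0 (inner ℝ (σ₀ n) n : ℝ) / σc) ^ m) μ := by
    intro σ₀
    apply Integrable.mono' (integrable_const (((‖σ₀‖ + 1) / σc) ^ m)) (hmeasF σ₀)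
    filter_upwards [hμ] with n hn1
    have hc : max 0 (inner ℝ (σ₀ n) n : ℝ) ≤ ‖σ₀‖ + 1 := by
      apply max_le (by positivity)
      calc (inner ℝ (σ₀ n) n : ℝ) ≤ ‖σ₀ n‖ * ‖n‖ := real_inner_le_norm _ _
        _ ≤ (‖σ₀‖ * ‖n‖) * ‖n‖ := by gcongr; exact σ₀.le_opNorm n
        _ = ‖σ₀‖ := by rw [hn1]; ring
        _ ≤ ‖σ₀‖ + 1 := by linarith
    rw [Real.norm_eq_abs, abs_of_nonneg (Real.rpow_nonneg (by positivity) m)]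
    exact Real.rpow_le_rpow (by positivity) (by gcongr) hm0.le
  letI : ContinuousENorm ((E →L[ℝ] E) →L[ℝ] ℝ) :=
    @SeminormedAddGroup.toContinuousENorm ((E →L[ℝ] E) →L[ℝ] ℝ) _
  have hIntF' : ∀ σ₀ : E →L[ℝ] E, Integrable (F' σ₀) μ := by
    intro σ₀
    apply Integrable.mono' (β := (E →L[ℝ] E) →L[ℝ] ℝ)
      (integrable_const (m * (‖σ₀‖ + 1) ^ (m - 1) / σc ^ m)) (hmeasF' σ₀)
    filter_upwards [hbound σ₀] with n h
    exact h σ₀ (Metric.mem_ball_self one_pos)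
  have HasF : ∀ σ₀ : E →L[ℝ] E,
      HasFDerivAt (fun σ : E →L[ℝ] E => ∫ n, (max 0 (inner ℝ (σ n) n : ℝ) / σc) ^ m ∂μ)
        (∫ n, F' σ₀ n ∂μ) σ₀ := by
    intro σ₀
    exact hasFDerivAt_integral_of_dominated_of_fderiv_le (Metric.ball_mem_nhds σ₀ one_pos)
      (Filter.Eventually.of_forall hmeasF) (hIntF σ₀) (hmeasF' σ₀) (hbound σ₀)
      (integrable_const _)
      (Filter.Eventually.of_forall fun n x _ => key x n)
  constructor
  · rw [contDiff_one_iff_fderiv]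
    refine ⟨fun σ₀ => (HasF σ₀).differentiableAt, ?_⟩
    have heq : (fderiv ℝ fun σ : E →L[ℝ] E => ∫ n, (max 0 (inner ℝ (σ n) n : ℝ) / σc) ^ m ∂μ)
        = fun σ₀ => ∫ n, F' σ₀ n ∂μ := funext fun σ₀ => (HasF σ₀).fderiv
    rw [heq, continuous_iff_continuousAt]
    intro σ₀
    apply continuousAt_of_dominated (Filter.Eventually.of_forall hmeasF')
      ?_ (integrable_const (m * (‖σ₀‖ + 1) ^ (m - 1) / σc ^ m)) ?_
    · filter_upwards [Metric.ball_mem_nhds σ₀ one_pos] with x hx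
      filter_upwards [hbound σ₀] with n h
      exact h x hx
    · apply Filter.Eventually.of_forall
      intro n
      apply Continuous.continuousAt
      exact (hg'cont.comp (hinner_cont_σ n)).smul continuous_const
  · intro σ₀ M
    rw [(HasF σ₀).fderiv, ContinuousLinearMap.integral_apply (hIntF' σ₀) M]
    apply integral_congr_ae
    apply Filter.Eventually.of_forall
    intro n
    simp only [F', ContinuousLinearMap.coe_smul', Pi.smul_apply, hLapp, smul_eq_mul, g']
    ring



/-- The ceramic reliability integrand `𝓕^cer(σ) = ∫_{S²} ((max{0, nᵀσn})/σ_c)^m dS(n)`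
(integral over the unit sphere with its 2-dimensional Hausdorff surface measure) is
continuously Fréchet differentiable for `m > 1`, with derivative at `σ₀` in direction `M`
given by `∫_{S²} m (max{0, nᵀσ₀n})^{m−1} (nᵀMn) / σ_c^m dS(n)`; in particular the
integrand's derivative vanishes wherever `nᵀσ₀n ≤ 0`. -/
theorem stmt_19 (m σc : ℝ) (hm : 1 < m) (hσc : 0 < σc)
    (F : (EuclideanSpace ℝ (Fin 3) →L[ℝ] EuclideanSpace ℝ (Fin 3)) → ℝ)
    (hF : ∀ σ : EuclideanSpace ℝ (Fin 3) →L[ℝ] EuclideanSpace ℝ (Fin 3),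
      F σ = ∫ n in Metric.sphere (0 : EuclideanSpace ℝ (Fin 3)) 1,
        (max 0 (inner ℝ (σ n) n : ℝ) / σc) ^ m ∂(μH[2])) :
    ContDiff ℝ 1 F ∧
    ∀ (σ₀ M : EuclideanSpace ℝ (Fin 3) →L[ℝ] EuclideanSpace ℝ (Fin 3)),
      fderiv ℝ F σ₀ M = ∫ n in Metric.sphere (0 : EuclideanSpace ℝ (Fin 3)) 1,
        m * (max 0 (inner ℝ (σ₀ n) n : ℝ)) ^ (m - 1) * (inner ℝ (M n) n : ℝ) / σc ^ m ∂(μH[2]) := by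
  have hμ : ∀ᵐ n ∂((μH[2] : Measure (EuclideanSpace ℝ (Fin 3))).restrict
      (Metric.sphere 0 1)), ‖n‖ = 1 := by
    filter_upwards [ae_restrict_mem Metric.isClosed_sphere.measurableSet] with n hn
    exact mem_sphere_zero_iff_norm.mp hn
  obtain ⟨h1, h2⟩ := aux_main m σc hm hσc _ hμ
  have hFeq : F = fun σ => ∫ n in Metric.sphere (0 : EuclideanSpace ℝ (Fin 3)) 1,
      (max 0 (inner ℝ (σ n) n : ℝ) / σc) ^ m ∂(μH[2]) := funext hF
  rw [hFeq]
  exact ⟨h1, h2⟩
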